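/- arXiv:1303.6491 — 2 statements merged into one kernel-verified Lean document; each statement's English description precedes it below -/
import Mathlib

section
/- Let R = ((ℓ_1,…,ℓ_d),(u_1,…,u_{d+1})) be a constructible special point data of level d with q nodes, let ℓ ∈ {1,…,q}, and let (v_1,…,v_{d+1}) be the reordering of (u_1,…,u_{d+1}) that is increasing for the relation <_ℓ relative to the node labels of R. Then for every j = 1,…,d one has a^ℓ_{v_j}(R) ≥ a^ℓ_{v_{j+1}}(R). -/
/-- The relation `u <_ℓ u'` on `{1,2}^d`, relative to node labels `lab : Fin d → ℕ`. -/
def ltNode {d : ℕ} (lab : Fin d → ℕ) (ℓ : ℕ) (u u' : Fin d → ℕ) : Prop :=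
  (∃ k₀ : Fin d, lab k₀ = ℓ ∧ u k₀ = 2 ∧ u' k₀ = 1 ∧
      ∀ k : Fin d, k₀ < k → lab k = ℓ → u k = u' k) ∨
  ((∀ k : Fin d, lab k = ℓ → u k = u' k) ∧
    ∃ k₀ : Fin d, lab k₀ ≠ ℓ ∧ u k₀ = 1 ∧ u' k₀ = 2 ∧
      ∀ k : Fin d, k < k₀ → u k = u' k)

/-- Constructible special point data of level `d` with `q` nodes. -/
inductive Constructible (q : ℕ) :
    (d : ℕ) → (Fin d → ℕ) → (Fin (d + 1) → Fin d → ℕ) → Prop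
  | base (ℓ : ℕ) (h1 : 1 ≤ ℓ) (hq : ℓ ≤ q) :
      Constructible q 1 (fun _ => ℓ) ![![1], ![2]]
  | step {d : ℕ} {lab : Fin d → ℕ} {u : Fin (d + 1) → Fin d → ℕ}
      (hR : Constructible q d lab u) (ℓ : ℕ) (h1 : 1 ≤ ℓ) (hq : ℓ ≤ q)
      (v : Fin (d + 1) → Fin d → ℕ) (σ : Equiv.Perm (Fin (d + 1)))
      (hv : ∀ j, v j = u (σ j))
      (hsort : ∀ i j : Fin (d + 1), i < j → ltNode lab ℓ (v i) (v j))
      (h : ℕ) (hh1 : 1 ≤ h) (hh2 : h ≤ d + 1) :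
      Constructible q (d + 1) (Fin.snoc lab ℓ)
        (fun j : Fin (d + 2) =>
          if hj : (j : ℕ) < h then Fin.snoc (v ⟨(j : ℕ), by omega⟩) 1
          else Fin.snoc (v ⟨(j : ℕ) - 1, by omega⟩) 2)

/-- `a^ℓ_u(R)`: the number of `k` with `ℓ_k = ℓ` and `u(k) = 2`. -/
def aCount {d : ℕ} (lab : Fin d → ℕ) (ℓ : ℕ) (u : Fin d → ℕ) : ℕ :=
  (Finset.univ.filter (fun k : Fin d => lab k = ℓ ∧ u k = 2)).card

/-- `|a_u(R)|`: the number of `k` with `u(k) = 2`. -/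
def aTot {d : ℕ} (u : Fin d → ℕ) : ℕ :=
  (Finset.univ.filter (fun k : Fin d => u k = 2)).card

/-- Lexicographic order on tuples, comparing at the smallest coordinate where they differ. -/
def lexLt {d : ℕ} (u u' : Fin d → ℕ) : Prop :=
  ∃ k₀ : Fin d, (∀ k : Fin d, k < k₀ → u k = u' k) ∧ u k₀ < u' k₀

lemma aCount_eq_sum {d : ℕ} (lab : Fin d → ℕ) (ℓ : ℕ) (u : Fin d → ℕ) :
    aCount lab ℓ u = ∑ k : Fin d, if lab k = ℓ ∧ u k = 2 then 1 else 0 := by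
  rw [aCount, Finset.card_filter]

lemma aCount_snoc {d : ℕ} (lab : Fin d → ℕ) (ℓ' ℓ : ℕ) (x : Fin d → ℕ) (ε : ℕ) :
    aCount (Fin.snoc lab ℓ') ℓ (Fin.snoc x ε)
      = aCount lab ℓ x + (if ℓ' = ℓ ∧ ε = 2 then 1 else 0) := by
  rw [aCount_eq_sum, aCount_eq_sum, Fin.sum_univ_castSucc]
  simp

lemma aCount_congr {d : ℕ} {lab : Fin d → ℕ} {ℓ : ℕ} {x y : Fin d → ℕ}
    (hxy : ∀ k, lab k = ℓ → x k = y k) : aCount lab ℓ x = aCount lab ℓ y := by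
  simp only [aCount_eq_sum]
  refine Finset.sum_congr rfl fun k _ => ?_
  by_cases hl : lab k = ℓ
  · rw [hxy k hl]
  · simp [hl]

lemma ltNode_snoc {d : ℕ} {lab : Fin d → ℕ} {ℓ' ℓ : ℕ} {x y : Fin d → ℕ} {a b : ℕ}
    (hlt : ltNode (Fin.snoc lab ℓ') ℓ (Fin.snoc x a) (Fin.snoc y b)) :
    (ℓ' = ℓ ∧ a = 2 ∧ b = 1) ∨
    (ltNode lab ℓ x y ∧ (ℓ' = ℓ → a = b)) ∨
    ((∀ k, lab k = ℓ → x k = y k) ∧ (ℓ' = ℓ → a = b)) := by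
  rcases hlt with ⟨k₀, hlab, h2, h1, hlater⟩ | ⟨hall, _⟩
  · induction k₀ using Fin.lastCases with
    | last =>
        simp only [Fin.snoc_last] at hlab h2 h1
        exact Or.inl ⟨hlab, h2, h1⟩
    | cast k =>
        simp only [Fin.snoc_castSucc] at hlab h2 h1
        refine Or.inr (Or.inl ⟨Or.inl ⟨k, hlab, h2, h1, fun k' hk' hl => ?_⟩, fun hℓ => ?_⟩)
        · have := hlater k'.castSucc (by exact_mod_cast Fin.castSucc_lt_castSucc_iff.mpr hk')
            (by simpa using hl)
          simpa using this
        · have := hlater (Fin.last d) (Fin.castSucc_lt_last k) (by simpa using hℓ)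
          simpa using this
  · refine Or.inr (Or.inr ⟨fun k hl => ?_, fun hℓ => ?_⟩)
    · have := hall k.castSucc (by simpa using hl)
      simpa using this
    · have := hall (Fin.last d) (by simpa using hℓ)
      simpa using this

lemma constructible_main {q d : ℕ} {lab : Fin d → ℕ} {u : Fin (d + 1) → Fin d → ℕ}
    (hR : @Constructible q d lab u) :
    (∀ (ℓ : ℕ) (i j : Fin (d + 1)), ltNode lab ℓ (u i) (u j) →
        aCount lab ℓ (u j) ≤ aCount lab ℓ (u i)) ∧
    (∀ (ℓ : ℕ) (i j : Fin (d + 1)), aCount lab ℓ (u i) ≤ aCount lab ℓ (u j) + 1) := by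
  induction hR with
  | base ℓ₁ h1 hq =>
      constructor
      · intro ℓ i j hlt
        fin_cases i <;> fin_cases j <;>
          simp_all [ltNode, aCount_eq_sum, Fin.sum_univ_succ] <;> omega
      · intro ℓ i j
        fin_cases i <;> fin_cases j <;>
          simp [aCount_eq_sum, Fin.sum_univ_succ] <;> split_ifs <;> omega
  | @step d lab u hR ℓ' h1' hq' v σ hv hsort h hh1 hh2 ih =>
      obtain ⟨ihA, ihB⟩ := ih
      -- decomposition of the new tuples
      have hidx1 : ∀ j : Fin (d + 2), (j : ℕ) < h → (j : ℕ) < d + 1 := fun j hj => by omega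
      have hidx2 : ∀ j : Fin (d + 2), (j : ℕ) - 1 < d + 1 := fun j => by omega
      set w : Fin (d + 2) → Fin (d + 1) → ℕ := fun j : Fin (d + 2) =>
          if hj : (j : ℕ) < h then Fin.snoc (v ⟨(j : ℕ), by omega⟩) 1
          else Fin.snoc (v ⟨(j : ℕ) - 1, by omega⟩) 2 with hwdef
      set idx : Fin (d + 2) → Fin (d + 1) := fun j =>
          if _ : (j : ℕ) < h then ⟨(j : ℕ), by omega⟩ else ⟨(j : ℕ) - 1, by omega⟩ with hidxdef
      set eps : Fin (d + 2) → ℕ := fun j => if (j : ℕ) < h then 1 else 2 with hepsdef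
      have hw : ∀ j, w j = Fin.snoc (v (idx j)) (eps j) := by
        intro j
        by_cases hj : (j : ℕ) < h <;> simp [hwdef, hidxdef, hepsdef, hj]
      -- key antitonicity on old data, transported through σ
      have key : ∀ (ℓ : ℕ) (a b : Fin (d + 1)), ltNode lab ℓ (v a) (v b) →
          aCount lab ℓ (v b) ≤ aCount lab ℓ (v a) := by
        intro ℓ a b hab
        rw [hv a, hv b] at hab ⊢
        exact ihA ℓ (σ a) (σ b) hab
      have keyB : ∀ (ℓ : ℕ) (a b : Fin (d + 1)),
          aCount lab ℓ (v a) ≤ aCount lab ℓ (v b) + 1 := by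
        intro ℓ a b
        rw [hv a, hv b]
        exact ihB ℓ (σ a) (σ b)
      have keyMono : ∀ (a b : Fin (d + 1)), a ≤ b →
          aCount lab ℓ' (v b) ≤ aCount lab ℓ' (v a) := by
        intro a b hab
        rcases lt_or_eq_of_le hab with hlt | rfl
        · exact key ℓ' a b (hsort a b hlt)
        · exact le_refl _
      constructor
      · intro ℓ i j hlt
        rw [hw i, hw j] at hlt ⊢
        rw [aCount_snoc, aCount_snoc]
        rcases ltNode_snoc hlt with ⟨hℓ, ha2, hb1⟩ | ⟨hxy, hab⟩ | ⟨hagree, hab⟩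
        · have := keyB ℓ (idx j) (idx i)
          simp [hℓ, ha2, hb1]
          omega
        · have := key ℓ (idx i) (idx j) hxy
          by_cases hℓ : ℓ' = ℓ
          · rw [hab hℓ]; omega
          · simp [hℓ]; omega
        · have := aCount_congr hagree
          by_cases hℓ : ℓ' = ℓ
          · rw [hab hℓ]; omega
          · simp [hℓ]; omega
      · intro ℓ i j
        rw [hw i, hw j, aCount_snoc, aCount_snoc]
        by_cases hℓ : ℓ' = ℓ
        · by_cases hi : (i : ℕ) < h <;> by_cases hj : (j : ℕ) < h
          · have := keyB ℓ (idx i) (idx j)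
            simp [hepsdef, hi, hj]
            omega
          · have := keyB ℓ (idx i) (idx j)
            simp [hepsdef, hi, hj, hℓ]
            omega
          · -- hard case: eps i = 2, eps j = 1, so idx j ≤ idx i
            have hle : idx j ≤ idx i := by
              simp only [hidxdef]
              rw [dif_pos hj, dif_neg hi]
              exact Fin.mk_le_mk.mpr (by omega)
            have hmono := keyMono (idx j) (idx i) hle
            rw [← hℓ]
            simp [hepsdef, hi, hj]
            omega
          · have := keyB ℓ (idx i) (idx j)
            simp [hepsdef, hi, hj, hℓ]
            omega
        · have := keyB ℓ (idx i) (idx j)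
          simp [hℓ]
          omega

/-- If `(v_1,…,v_{d+1})` is the reordering of the tuples of a constructible special point
data that is increasing for `<_ℓ`, then the quantities `a^ℓ_{v_j}(R)` are nonincreasing
in `j`. -/
theorem constructible_aCount_anti {q d : ℕ} (hq : 1 ≤ q) (hd : 1 ≤ d)
    {lab : Fin d → ℕ} {u : Fin (d + 1) → Fin d → ℕ}
    (hR : Constructible q d lab u) (ℓ : ℕ) (hℓ1 : 1 ≤ ℓ) (hℓq : ℓ ≤ q)
    (v : Fin (d + 1) → Fin d → ℕ) (σ : Equiv.Perm (Fin (d + 1)))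
    (hv : ∀ j, v j = u (σ j))
    (hsort : ∀ i j : Fin (d + 1), i < j → ltNode lab ℓ (v i) (v j)) :
    ∀ j : Fin d, aCount lab ℓ (v j.succ) ≤ aCount lab ℓ (v j.castSucc) := by
  intro j
  have hlt := hsort j.castSucc j.succ (Fin.castSucc_lt_succ (i := j))
  rw [hv j.castSucc, hv j.succ] at hlt ⊢
  exact (constructible_main hR).1 ℓ (σ j.castSucc) (σ j.succ) hlt
end

section
/- Let R = ((ℓ_1,…,ℓ_d),(u_1,…,u_{d+1})) be a constructible special point data of level d with q nodes, and assume u_1, …, u_{d+1} is listed in increasing lexicographic order. Then for every j = 1,…,d one has |a_{u_{j+1}}(R)| − |a_{u_j}(R)| ≤ 1. -/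
-- basic lemmas
lemma ltNode_irrefl {d : ℕ} (lab : Fin d → ℕ) (ℓ : ℕ) (x : Fin d → ℕ) :
    ¬ ltNode lab ℓ x x := by
  rintro (⟨k₀, _, h2, h3, _⟩ | ⟨_, k₀, _, h2, h3, _⟩) <;> omega

lemma ltNode_asymm {d : ℕ} {lab : Fin d → ℕ} {ℓ : ℕ} {x y : Fin d → ℕ}
    (h1 : ltNode lab ℓ x y) (h2 : ltNode lab ℓ y x) : False := by
  rcases h1 with ⟨k₀, hl0, hx0, hy0, ha0⟩ | ⟨he0, k₀, hl0, hx0, hy0, ha0⟩ <;>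
    rcases h2 with ⟨k₁, hl1, hy1, hx1, ha1⟩ | ⟨he1, k₁, hl1, hy1, hx1, ha1⟩
  · rcases lt_trichotomy k₀ k₁ with h | h | h
    · have := ha0 k₁ h hl1; omega
    · subst h; omega
    · have := ha1 k₀ h hl0; omega
  · have := he1 k₀ hl0; omega
  · have := he0 k₁ hl1; omega
  · rcases lt_trichotomy k₀ k₁ with h | h | h
    · have := ha1 k₀ h; omega
    · subst h; omega
    · have := ha0 k₁ h; omega

lemma lexLt_asymm {d : ℕ} {x y : Fin d → ℕ}
    (h1 : lexLt x y) (h2 : lexLt y x) : False := by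
  obtain ⟨k₀, hp0, hv0⟩ := h1
  obtain ⟨k₁, hp1, hv1⟩ := h2
  rcases lt_trichotomy k₀ k₁ with h | h | h
  · have := hp1 k₀ h; omega
  · subst h; omega
  · have := hp0 k₁ h; omega

lemma lexLt_irrefl {d : ℕ} (x : Fin d → ℕ) : ¬ lexLt x x := by
  rintro ⟨k₀, _, hv⟩; omega

lemma aTot_snoc {d : ℕ} (x : Fin d → ℕ) (e : ℕ) :
    aTot (Fin.snoc x e : Fin (d+1) → ℕ) = aTot x + (if e = 2 then 1 else 0) := by
  simp only [aTot, Finset.card_filter]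
  rw [Fin.sum_univ_castSucc]
  simp [Fin.snoc_castSucc, Fin.snoc_last]

lemma lexLt_snoc {d : ℕ} {x y : Fin d → ℕ} {e e' : ℕ} :
    lexLt (Fin.snoc x e : Fin (d+1) → ℕ) (Fin.snoc y e') ↔
      lexLt x y ∨ (x = y ∧ e < e') := by
  constructor
  · rintro ⟨k₀, hp, hv⟩
    rcases Fin.eq_castSucc_or_eq_last k₀ with ⟨k, rfl⟩ | rfl
    · left
      refine ⟨k, fun k' hk' => ?_, by simpa using hv⟩
      have := hp k'.castSucc (by exact_mod_cast hk')
      simpa using this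
    · right
      constructor
      · funext k
        have := hp k.castSucc (Fin.castSucc_lt_last k)
        simpa using this
      · simpa using hv
  · rintro (⟨k₀, hp, hv⟩ | ⟨rfl, hee⟩)
    · refine ⟨k₀.castSucc, fun k hk => ?_, by simpa using hv⟩
      rcases Fin.eq_castSucc_or_eq_last k with ⟨k', rfl⟩ | rfl
      · have : k' < k₀ := by exact_mod_cast hk
        simp [hp k' this]
      · exact absurd hk (by simp [Fin.lt_iff_val_lt_val])
    · refine ⟨Fin.last d, fun k hk => ?_, by simpa⟩
      rcases Fin.eq_castSucc_or_eq_last k with ⟨k', rfl⟩ | rfl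
      · simp
      · exact absurd hk (lt_irrefl _)

section SnocLt
variable {d : ℕ} {lab : Fin d → ℕ} {ℓ ℓ' : ℕ} {x y : Fin d → ℕ} {e e' : ℕ}

lemma ltNode_snoc_21 (x y : Fin d → ℕ) :
    ltNode (Fin.snoc lab ℓ) ℓ (Fin.snoc x 2 : Fin (d+1) → ℕ) (Fin.snoc y 1) := by
  left
  refine ⟨Fin.last d, by simp, by simp, by simp, fun k hk _ => ?_⟩
  exact absurd hk (by simp [Fin.lt_iff_val_lt_val, k.isLt, Fin.last]; omega)

lemma ltNode_snoc_same :
    ltNode (Fin.snoc lab ℓ) ℓ (Fin.snoc x e : Fin (d+1) → ℕ) (Fin.snoc y e) ↔ ltNode lab ℓ x y := by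
  constructor
  · rintro (⟨k₀, hl, hx, hy, ha⟩ | ⟨he, k₀, hl, hx, hy, ha⟩)
    · rcases Fin.eq_castSucc_or_eq_last k₀ with ⟨k, rfl⟩ | rfl
      · left
        refine ⟨k, by simpa using hl, by simpa using hx, by simpa using hy, fun k' hk' hl' => ?_⟩
        have := ha k'.castSucc (by exact_mod_cast hk') (by simpa using hl')
        simpa using this
      · simp at hx hy; omega
    · rcases Fin.eq_castSucc_or_eq_last k₀ with ⟨k, rfl⟩ | rfl
      · right
        refine ⟨fun k' hl' => ?_, k, by simpa using hl, by simpa using hx, by simpa using hy,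
          fun k' hk' => ?_⟩
        · have := he k'.castSucc (by simpa using hl'); simpa using this
        · have := ha k'.castSucc (by exact_mod_cast hk'); simpa using this
      · simp at hx hy; omega
  · rintro (⟨k₀, hl, hx, hy, ha⟩ | ⟨he, k₀, hl, hx, hy, ha⟩)
    · left
      refine ⟨k₀.castSucc, by simpa using hl, by simpa using hx, by simpa using hy,
        fun k hk hl' => ?_⟩
      rcases Fin.eq_castSucc_or_eq_last k with ⟨k', rfl⟩ | rfl
      · have := ha k' (by exact_mod_cast hk) (by simpa using hl'); simpa using this
      · simp
    · right
      refine ⟨fun k hl' => ?_, k₀.castSucc, by simpa using hl, by simpa using hx,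
        by simpa using hy, fun k hk => ?_⟩
      · rcases Fin.eq_castSucc_or_eq_last k with ⟨k', rfl⟩ | rfl
        · have := he k' (by simpa using hl'); simpa using this
        · simp
      · rcases Fin.eq_castSucc_or_eq_last k with ⟨k', rfl⟩ | rfl
        · have := ha k' (by exact_mod_cast hk); simpa using this
        · exact absurd hk (by simp [Fin.lt_iff_val_lt_val, Fin.last])

lemma ltNode_snoc_12_false (x y : Fin d → ℕ) :
    ¬ ltNode (Fin.snoc lab ℓ) ℓ (Fin.snoc x 1 : Fin (d+1) → ℕ) (Fin.snoc y 2) := by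
  rintro (⟨k₀, hl, hx, hy, ha⟩ | ⟨he, k₀, hl, hx, hy, ha⟩)
  · rcases Fin.eq_castSucc_or_eq_last k₀ with ⟨k, rfl⟩ | rfl
    · have := ha (Fin.last d) (Fin.castSucc_lt_last k) (by simp)
      simp at this
    · simp at hx
  · have := he (Fin.last d) (by simp)
    simp at this

lemma ltNode_snoc_ne (hne : ℓ' ≠ ℓ) (hxy : x ≠ y) :
    ltNode (Fin.snoc lab ℓ) ℓ' (Fin.snoc x e : Fin (d+1) → ℕ) (Fin.snoc y e') ↔
      ltNode lab ℓ' x y := by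
  constructor
  · rintro (⟨k₀, hl, hx, hy, ha⟩ | ⟨he, k₀, hl, hx, hy, ha⟩)
    · rcases Fin.eq_castSucc_or_eq_last k₀ with ⟨k, rfl⟩ | rfl
      · left
        refine ⟨k, by simpa using hl, by simpa using hx, by simpa using hy, fun k' hk' hl' => ?_⟩
        have := ha k'.castSucc (by exact_mod_cast hk') (by simpa using hl')
        simpa using this
      · exact absurd (by simpa using hl) hne.symm
    · rcases Fin.eq_castSucc_or_eq_last k₀ with ⟨k, rfl⟩ | rfl
      · right
        refine ⟨fun k' hl' => ?_, k, by simpa using hl, by simpa using hx, by simpa using hy,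
          fun k' hk' => ?_⟩
        · have := he k'.castSucc (by simpa using hl'); simpa using this
        · have := ha k'.castSucc (by exact_mod_cast hk'); simpa using this
      · exfalso
        apply hxy
        funext k
        have := ha k.castSucc (Fin.castSucc_lt_last k)
        simpa using this
  · rintro (⟨k₀, hl, hx, hy, ha⟩ | ⟨he, k₀, hl, hx, hy, ha⟩)
    · left
      refine ⟨k₀.castSucc, by simpa using hl, by simpa using hx, by simpa using hy,
        fun k hk hl' => ?_⟩
      rcases Fin.eq_castSucc_or_eq_last k with ⟨k', rfl⟩ | rfl
      · have := ha k' (by exact_mod_cast hk) (by simpa using hl'); simpa using this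
      · exact absurd (by simpa using hl') hne.symm
    · right
      refine ⟨fun k hl' => ?_, k₀.castSucc, by simpa using hl, by simpa using hx,
        by simpa using hy, fun k hk => ?_⟩
      · rcases Fin.eq_castSucc_or_eq_last k with ⟨k', rfl⟩ | rfl
        · have := he k' (by simpa using hl'); simpa using this
        · exact absurd (by simpa using hl') hne.symm
      · rcases Fin.eq_castSucc_or_eq_last k with ⟨k', rfl⟩ | rfl
        · have := ha k' (by exact_mod_cast hk); simpa using this
        · exact absurd hk (by simp [Fin.lt_iff_val_lt_val, Fin.last])

lemma ltNode_snoc_ne_eq (hne : ℓ' ≠ ℓ) :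
    ltNode (Fin.snoc lab ℓ) ℓ' (Fin.snoc x e : Fin (d+1) → ℕ) (Fin.snoc x e') ↔
      (e = 1 ∧ e' = 2) := by
  constructor
  · rintro (⟨k₀, hl, hx, hy, ha⟩ | ⟨he, k₀, hl, hx, hy, ha⟩)
    · rcases Fin.eq_castSucc_or_eq_last k₀ with ⟨k, rfl⟩ | rfl
      · simp at hx hy; omega
      · exact absurd (by simpa using hl) hne.symm
    · rcases Fin.eq_castSucc_or_eq_last k₀ with ⟨k, rfl⟩ | rfl
      · simp at hx hy; omega
      · exact ⟨by simpa using hx, by simpa using hy⟩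
  · rintro ⟨rfl, rfl⟩
    right
    refine ⟨fun k hl' => ?_, Fin.last d, by simpa using hne.symm, by simp, by simp,
      fun k hk => ?_⟩
    · rcases Fin.eq_castSucc_or_eq_last k with ⟨k', rfl⟩ | rfl
      · simp
      · exact absurd (by simpa using hl') hne.symm
    · rcases Fin.eq_castSucc_or_eq_last k with ⟨k', rfl⟩ | rfl
      · simp
      · exact absurd hk (lt_irrefl _)

end SnocLt

section Invariant

/-- `b` is the immediate `lt`-successor of `a` within the family `u`. -/
def SuccAt {n d : ℕ} (u : Fin n → Fin d → ℕ) (lt : (Fin d → ℕ) → (Fin d → ℕ) → Prop)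
    (a b : Fin d → ℕ) : Prop :=
  lt a b ∧ ∀ k, ¬ (lt a (u k) ∧ lt (u k) b)

def MaxMin {n d : ℕ} (u : Fin n → Fin d → ℕ) (lt : (Fin d → ℕ) → (Fin d → ℕ) → Prop)
    (a b : Fin d → ℕ) : Prop :=
  (∀ k, u k ≠ a → lt (u k) a) ∧ (∀ k, u k ≠ b → lt b (u k))

def Adj {n d : ℕ} (u : Fin n → Fin d → ℕ) (a b : Fin d → ℕ) : Prop :=
  (∃ i, u i = a) ∧ (∃ j, u j = b) ∧ lexLt a b ∧ ∀ k, ¬ (lexLt a (u k) ∧ lexLt (u k) b)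

def Good (q : ℕ) {n d : ℕ} (lab : Fin d → ℕ) (u : Fin n → Fin d → ℕ)
    (a b : Fin d → ℕ) : Prop :=
  (aTot b = aTot a ∧ ∀ ℓ', 1 ≤ ℓ' → ℓ' ≤ q → SuccAt u (ltNode lab ℓ') a b) ∨
  (aTot b = aTot a + 1 ∧ ∃ ℓs, 1 ≤ ℓs ∧ ℓs ≤ q ∧ MaxMin u (ltNode lab ℓs) a b ∧
    ∀ ℓ', 1 ≤ ℓ' → ℓ' ≤ q → ℓ' ≠ ℓs → SuccAt u (ltNode lab ℓ') a b)

def KInv (q d : ℕ) (lab : Fin d → ℕ) (u : Fin (d+1) → Fin d → ℕ) : Prop :=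
  Function.Injective u ∧ ∀ a b, Adj u a b → Good q lab u a b

/-- transfer of the invariant along a surjection of index families -/
lemma succAt_trans {n d : ℕ} {u v : Fin n → Fin d → ℕ}
    (hr : ∀ k, ∃ k', v k' = u k) {lt a b} (h : SuccAt v lt a b) : SuccAt u lt a b := by
  refine ⟨h.1, fun k hk => ?_⟩
  obtain ⟨k', hk'⟩ := hr k
  exact h.2 k' (hk' ▸ hk)

lemma maxMin_trans {n d : ℕ} {u v : Fin n → Fin d → ℕ}
    (hr : ∀ k, ∃ k', v k' = u k) {lt a b} (h : MaxMin v lt a b) : MaxMin u lt a b := by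
  constructor
  · intro k hk
    obtain ⟨k', hk'⟩ := hr k
    exact hk' ▸ h.1 k' (hk' ▸ hk)
  · intro k hk
    obtain ⟨k', hk'⟩ := hr k
    exact hk' ▸ h.2 k' (hk' ▸ hk)

lemma good_trans {q n d : ℕ} {lab : Fin d → ℕ} {u v : Fin n → Fin d → ℕ}
    (hr : ∀ k, ∃ k', v k' = u k) {a b} (h : Good q lab v a b) : Good q lab u a b := by
  rcases h with ⟨h1, h2⟩ | ⟨h1, ℓs, hs1, hs2, hmm, hs⟩
  · exact Or.inl ⟨h1, fun ℓ' a1 a2 => succAt_trans hr (h2 ℓ' a1 a2)⟩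
  · exact Or.inr ⟨h1, ℓs, hs1, hs2, maxMin_trans hr hmm,
      fun ℓ' a1 a2 a3 => succAt_trans hr (hs ℓ' a1 a2 a3)⟩

lemma adj_trans {n d : ℕ} {u v : Fin n → Fin d → ℕ}
    (hr : ∀ k, ∃ k', u k' = v k) (hr' : ∀ k, ∃ k', v k' = u k)
    {a b} (h : Adj v a b) : Adj u a b := by
  obtain ⟨⟨i, hi⟩, ⟨j, hj⟩, hlex, hnb⟩ := h
  obtain ⟨i', hi'⟩ := hr i
  obtain ⟨j', hj'⟩ := hr j
  refine ⟨⟨i', hi' ▸ hi⟩, ⟨j', hj' ▸ hj⟩, hlex, fun k hk => ?_⟩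
  obtain ⟨k', hk'⟩ := hr' k
  exact hnb k' (hk' ▸ hk)

end Invariant

section Base

lemma base_inv {q ℓ : ℕ} (h1 : 1 ≤ ℓ) (hq : ℓ ≤ q) :
    KInv q 1 (fun _ => ℓ) ![![1], ![2]] := by
  have hne : (![1] : Fin 1 → ℕ) ≠ ![2] := by
    intro h
    have := congrFun h 0
    simp at this
  have hvals : ∀ k : Fin 2, (![![1], ![2]] : Fin 2 → Fin 1 → ℕ) k = ![1] ∨
      (![![1], ![2]] : Fin 2 → Fin 1 → ℕ) k = ![2] := by
    intro k; fin_cases k <;> simp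
  have hlt21 : ∀ ℓ'' : ℕ, ltNode (fun _ : Fin 1 => ℓ) ℓ'' (![2]) (![1]) ∨
      ltNode (fun _ : Fin 1 => ℓ) ℓ'' (![1]) (![2]) := by
    intro ℓ''
    by_cases hc : ℓ = ℓ''
    · left; left
      exact ⟨0, hc, by simp, by simp, fun k hk => absurd hk (by omega)⟩
    · right; right
      refine ⟨fun k hk => absurd hk hc, 0, hc, by simp, by simp, fun k hk => absurd hk (by omega)⟩
  constructor
  · intro i j hij
    fin_cases i <;> fin_cases j
    · rfl
    · exact absurd (by simpa using hij) hne
    · exact absurd (by simpa using hij.symm) hne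
    · rfl
  · intro a b ⟨⟨i, hi⟩, ⟨j, hj⟩, hlex, hnb⟩
    have ha := hvals i; rw [hi] at ha
    have hb := hvals j; rw [hj] at hb
    have h12 : a = ![1] ∧ b = ![2] := by
      rcases ha with rfl | rfl <;> rcases hb with rfl | rfl
      · exact absurd hlex (lexLt_irrefl _)
      · exact ⟨rfl, rfl⟩
      · exfalso; obtain ⟨k₀, _, hv⟩ := hlex; fin_cases k₀; simp at hv
      · exact absurd hlex (lexLt_irrefl _)
    obtain ⟨rfl, rfl⟩ := h12
    right
    have h21 : ltNode (fun _ : Fin 1 => ℓ) ℓ (![2]) (![1]) := by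
      left; exact ⟨0, rfl, by simp, by simp, fun k hk => absurd hk (by omega)⟩
    refine ⟨by simp [aTot], ℓ, h1, hq, ⟨?_, ?_⟩, ?_⟩
    · intro k hk
      rcases hvals k with h | h <;> rw [h]
      · exact absurd h hk
      · exact h21
    · intro k hk
      rcases hvals k with h | h <;> rw [h]
      · exact h21
      · exact absurd h hk
    · intro ℓ' _ _ hne'
      have hlt : ltNode (fun _ : Fin 1 => ℓ) ℓ' (![1]) (![2]) := by
        right
        refine ⟨fun k hk => absurd hk (Ne.symm hne'), 0, Ne.symm hne', by simp, by simp,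
          fun k hk => absurd hk (by omega)⟩
      refine ⟨hlt, fun k ⟨hk1, hk2⟩ => ?_⟩
      rcases hvals k with h | h <;> rw [h] at hk1 hk2
      · exact ltNode_irrefl _ _ _ hk1
      · exact ltNode_irrefl _ _ _ hk2

end Base

section Sorted
variable {q d : ℕ} {lab : Fin d → ℕ} {ℓ : ℕ} {v : Fin (d+1) → Fin d → ℕ}

lemma index_lt_of_ltNode (hsort : ∀ i j : Fin (d+1), i < j → ltNode lab ℓ (v i) (v j))
    {i j : Fin (d+1)} (h : ltNode lab ℓ (v i) (v j)) : i < j := by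
  rcases lt_trichotomy i j with hc | hc | hc
  · exact hc
  · subst hc; exact absurd h (ltNode_irrefl _ _ _)
  · exact absurd h (fun h => ltNode_asymm h (hsort j i hc))

lemma succ_index (hsort : ∀ i j : Fin (d+1), i < j → ltNode lab ℓ (v i) (v j))
    {i j : Fin (d+1)} (h : SuccAt v (ltNode lab ℓ) (v i) (v j)) : (j : ℕ) = (i : ℕ) + 1 := by
  have hij : i < j := index_lt_of_ltNode hsort h.1
  by_contra hc
  have hij' : (i : ℕ) + 1 < (j : ℕ) := by
    have := Fin.lt_def.mp hij; omega
  have hm : (⟨(i : ℕ) + 1, by omega⟩ : Fin (d+1)) < j := by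
    rw [Fin.lt_def]; exact hij'
  have hm' : i < (⟨(i : ℕ) + 1, by omega⟩ : Fin (d+1)) := by
    rw [Fin.lt_def]; simp
  exact h.2 _ ⟨hsort _ _ hm', hsort _ _ hm⟩

lemma max_index (hvinj : Function.Injective v)
    (hsort : ∀ i j : Fin (d+1), i < j → ltNode lab ℓ (v i) (v j))
    {i : Fin (d+1)} (h : ∀ k, v k ≠ v i → ltNode lab ℓ (v k) (v i)) : (i : ℕ) = d := by
  by_contra hc
  have hlt : i < Fin.last d := by
    rw [Fin.lt_def]; simp [Fin.last]; omega
  have h1 := hsort i (Fin.last d) hlt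
  have h2 := h (Fin.last d) (fun he => absurd (hvinj he) (by intro hh; rw [hh] at hlt; exact lt_irrefl _ hlt))
  exact ltNode_asymm h1 h2

lemma min_index (hvinj : Function.Injective v)
    (hsort : ∀ i j : Fin (d+1), i < j → ltNode lab ℓ (v i) (v j))
    {i : Fin (d+1)} (h : ∀ k, v k ≠ v i → ltNode lab ℓ (v i) (v k)) : (i : ℕ) = 0 := by
  by_contra hc
  have hlt : (⟨0, by omega⟩ : Fin (d+1)) < i := by
    rw [Fin.lt_def]
    simpa using Nat.pos_of_ne_zero hc
  have h1 := hsort _ i hlt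
  have h2 := h ⟨0, by omega⟩ (fun he => absurd (hvinj he)
    (by intro hh; rw [← hh] at hlt; exact lt_irrefl _ hlt))
  exact ltNode_asymm h2 h1

end Sorted

section Step

lemma snoc_injj {d : ℕ} {x y : Fin d → ℕ} {e e' : ℕ}
    (h : (Fin.snoc x e : Fin (d+1) → ℕ) = Fin.snoc y e') : x = y ∧ e = e' := by
  constructor
  · funext k
    have := congrFun h k.castSucc
    simpa using this
  · have := congrFun h (Fin.last d)
    simpa using this

lemma step_inv {q d : ℕ} {lab : Fin d → ℕ} {v : Fin (d+1) → Fin d → ℕ} {ℓ : ℕ}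
    (hl1 : 1 ≤ ℓ) (hlq : ℓ ≤ q)
    (hvinj : Function.Injective v)
    (hvgood : ∀ a b, Adj v a b → Good q lab v a b)
    (hsort : ∀ i j : Fin (d+1), i < j → ltNode lab ℓ (v i) (v j))
    {h : ℕ} (hh1 : 1 ≤ h) (hh2 : h ≤ d+1)
    {w : Fin (d+2) → Fin (d+1) → ℕ}
    (hw1 : ∀ (j : Fin (d+2)) (_ : (j:ℕ) < h) (pf : (j:ℕ) < d+1),
      w j = Fin.snoc (v ⟨(j:ℕ), pf⟩) 1)
    (hw2 : ∀ (j : Fin (d+2)) (_ : ¬ (j:ℕ) < h) (pf : (j:ℕ)-1 < d+1),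
      w j = Fin.snoc (v ⟨(j:ℕ)-1, pf⟩) 2) :
    KInv q (d+1) (Fin.snoc lab ℓ) w := by
  have hrange : ∀ jj : Fin (d+2), ∃ (m : Fin (d+1)) (e : ℕ), w jj = Fin.snoc (v m) e ∧
      ((e = 1 ∧ (m:ℕ) < h ∧ (m:ℕ) = (jj:ℕ)) ∨
       (e = 2 ∧ h - 1 ≤ (m:ℕ) ∧ h ≤ (jj:ℕ) ∧ (m:ℕ) = (jj:ℕ) - 1)) := by
    intro jj
    by_cases hj : (jj:ℕ) < h
    · exact ⟨⟨(jj:ℕ), by omega⟩, 1, hw1 jj hj (by omega), Or.inl ⟨rfl, hj, rfl⟩⟩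
    · exact ⟨⟨(jj:ℕ) - 1, by omega⟩, 2, hw2 jj hj (by omega),
        Or.inr ⟨rfl, show h - 1 ≤ (jj:ℕ) - 1 by omega, by omega, rfl⟩⟩
  have hcopy1 : ∀ m : Fin (d+1), (m:ℕ) < h → ∃ jj, w jj = Fin.snoc (v m) 1 := by
    intro m hm
    exact ⟨⟨(m:ℕ), by omega⟩, hw1 ⟨(m:ℕ), by omega⟩ (by simpa using hm) (by simpa using m.isLt)⟩
  have hcopy2 : ∀ m : Fin (d+1), h - 1 ≤ (m:ℕ) → ∃ jj, w jj = Fin.snoc (v m) 2 := by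
    intro m hm
    exact ⟨⟨(m:ℕ) + 1, by omega⟩, hw2 ⟨(m:ℕ) + 1, by omega⟩ (by simp; omega) (by have := m.isLt; simp; omega)⟩
  have hcopy : ∀ m : Fin (d+1), ∃ jj e, w jj = Fin.snoc (v m) e := by
    intro m
    by_cases hm : (m:ℕ) < h
    · obtain ⟨jj, hj⟩ := hcopy1 m hm; exact ⟨jj, 1, hj⟩
    · obtain ⟨jj, hj⟩ := hcopy2 m (by omega); exact ⟨jj, 2, hj⟩
  constructor
  · -- injectivity
    intro i j hij
    obtain ⟨mi, ei, hwi, hsi⟩ := hrange i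
    obtain ⟨mj, ej, hwj, hsj⟩ := hrange j
    rw [hwi, hwj] at hij
    obtain ⟨hv_eq, he_eq⟩ := snoc_injj hij
    have hm_eq : mi = mj := hvinj hv_eq
    apply Fin.ext
    rcases hsi with ⟨he1, hlt1, hidx1⟩ | ⟨he1, _, hge1, hidx1⟩ <;>
      rcases hsj with ⟨he2, hlt2, hidx2⟩ | ⟨he2, _, hge2, hidx2⟩ <;>
      (try omega) <;> (rw [hm_eq] at hidx1; omega)
  · -- main goodness part
    intro a b hadj
    obtain ⟨⟨i₀, hi₀⟩, ⟨j₀, hj₀⟩, hlexab, hnb⟩ := hadj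
    obtain ⟨ma, ea, hwa, hsidea⟩ := hrange i₀
    obtain ⟨mb, eb, hwb, hsideb⟩ := hrange j₀
    have ha : a = Fin.snoc (v ma) ea := by rw [← hi₀, hwa]
    have hb : b = Fin.snoc (v mb) eb := by rw [← hj₀, hwb]
    clear hwa hwb hi₀ hj₀
    have hsidea' : (ea = 1 ∧ (ma:ℕ) < h) ∨ (ea = 2 ∧ h - 1 ≤ (ma:ℕ)) := by
      rcases hsidea with ⟨h1, h2, _⟩ | ⟨h1, h2, _⟩
      · exact Or.inl ⟨h1, h2⟩
      · exact Or.inr ⟨h1, h2⟩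
    have hsideb' : (eb = 1 ∧ (mb:ℕ) < h) ∨ (eb = 2 ∧ h - 1 ≤ (mb:ℕ)) := by
      rcases hsideb with ⟨h1, h2, _⟩ | ⟨h1, h2, _⟩
      · exact Or.inl ⟨h1, h2⟩
      · exact Or.inr ⟨h1, h2⟩
    clear hsidea hsideb
    by_cases hAB : v ma = v mb
    · -- doubled element: a = snoc A 1, b = snoc A 2, ma = mb = h-1
      have hmab : ma = mb := hvinj hAB
      subst hmab
      have hee : ea < eb := by
        rw [ha, hb] at hlexab
        rcases lexLt_snoc.mp hlexab with hc | ⟨_, hc⟩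
        · exact absurd hc (lexLt_irrefl _)
        · exact hc
      have hea : ea = 1 := by omega
      have heb : eb = 2 := by omega
      subst hea; subst heb
      have hma : (ma:ℕ) = h - 1 := by omega
      right
      refine ⟨by rw [ha, hb, aTot_snoc, aTot_snoc]; simp, ℓ, hl1, hlq, ⟨?_, ?_⟩, ?_⟩
      · -- max side
        intro k hk
        obtain ⟨mk, ek, hwk, hsidek⟩ := hrange k
        rw [hwk, ha]
        rcases hsidek with ⟨he1, hlt1, _⟩ | ⟨he1, _, _, _⟩
        · subst he1
          have hzA : v mk ≠ v ma := by
            intro hc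
            apply hk
            rw [hwk, hc, ha]
          have hmk : mk < ma := by
            rw [Fin.lt_def]
            have : mk ≠ ma := fun hc => hzA (by rw [hc])
            have := Fin.val_ne_of_ne this
            omega
          exact (ltNode_snoc_same).mpr (hsort mk ma hmk)
        · subst he1
          exact ltNode_snoc_21 _ _
      · -- min side
        intro k hk
        obtain ⟨mk, ek, hwk, hsidek⟩ := hrange k
        rw [hwk, hb]
        rcases hsidek with ⟨he1, _, _⟩ | ⟨he1, hge1, _, _⟩
        · subst he1
          exact ltNode_snoc_21 _ _
        · subst he1
          have hzA : v mk ≠ v ma := by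
            intro hc
            apply hk
            rw [hwk, hc, hb]
          have hmk : ma < mk := by
            rw [Fin.lt_def]
            have : mk ≠ ma := fun hc => hzA (by rw [hc])
            have := Fin.val_ne_of_ne this
            omega
          exact (ltNode_snoc_same).mpr (hsort ma mk hmk)
      · -- successor at ℓ' ≠ ℓ
        intro ℓ' _ _ hne
        constructor
        · rw [ha, hb]
          exact (ltNode_snoc_ne_eq hne).mpr ⟨rfl, rfl⟩
        · intro k ⟨h1, h2⟩
          obtain ⟨mk, ek, hwk, _⟩ := hrange k
          rw [hwk] at h1 h2
          by_cases hz : v mk = v ma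
          · rw [hz] at h1 h2
            rw [hb] at h2
            obtain ⟨he, _⟩ := (ltNode_snoc_ne_eq hne).mp h2
            rw [ha, he] at h1
            obtain ⟨hc, _⟩ := (ltNode_snoc_ne_eq hne).mp h1
            omega
          · rw [ha] at h1
            rw [hb] at h2
            have l1 := (ltNode_snoc_ne hne (fun hc => hz hc.symm)).mp h1
            have l2 := (ltNode_snoc_ne hne hz).mp h2
            exact ltNode_asymm l1 l2
    · -- v ma ≠ v mb : lift from the old invariant
      have hlexAB : lexLt (v ma) (v mb) := by
        rw [ha, hb] at hlexab
        rcases lexLt_snoc.mp hlexab with hc | ⟨hc, _⟩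
        · exact hc
        · exact absurd hc hAB
      have holdadj : Adj v (v ma) (v mb) := by
        refine ⟨⟨ma, rfl⟩, ⟨mb, rfl⟩, hlexAB, fun k ⟨h1, h2⟩ => ?_⟩
        obtain ⟨jj, e, hjj⟩ := hcopy k
        apply hnb jj
        rw [hjj, ha, hb]
        exact ⟨lexLt_snoc.mpr (Or.inl h1), lexLt_snoc.mpr (Or.inl h2)⟩
      -- determination of suffixes
      have hea2 : h - 1 ≤ (ma:ℕ) → ea = 2 := by
        intro hm
        by_contra hc
        have hea1 : ea = 1 := by rcases hsidea' with ⟨h1, _⟩ | ⟨h1, _⟩ <;> omega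
        obtain ⟨jj, hjj⟩ := hcopy2 ma hm
        apply hnb jj
        rw [hjj, ha, hb]
        exact ⟨lexLt_snoc.mpr (Or.inr ⟨rfl, by omega⟩), lexLt_snoc.mpr (Or.inl hlexAB)⟩
      have heb1 : (mb:ℕ) < h → eb = 1 := by
        intro hm
        by_contra hc
        have heb2 : eb = 2 := by rcases hsideb' with ⟨h1, _⟩ | ⟨h1, _⟩ <;> omega
        obtain ⟨jj, hjj⟩ := hcopy1 mb hm
        apply hnb jj
        rw [hjj, ha, hb]
        exact ⟨lexLt_snoc.mpr (Or.inl hlexAB), lexLt_snoc.mpr (Or.inr ⟨rfl, by omega⟩)⟩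
      have hAcopy : ea = 1 → ∀ (jj : Fin (d+2)) (e : ℕ), w jj = Fin.snoc (v ma) e → e = 1 := by
        intro h_ea jj e hjj
        obtain ⟨m, e', hw', hside'⟩ := hrange jj
        rw [hw'] at hjj
        obtain ⟨hv_eq, he_eq⟩ := snoc_injj hjj
        have hm_eq : m = ma := hvinj hv_eq
        rcases hside' with ⟨h1, _, _⟩ | ⟨h1, h2, _, _⟩
        · omega
        · subst hm_eq
          have := hea2 h2
          omega
      have hBcopy : eb = 2 → ∀ (jj : Fin (d+2)) (e : ℕ), w jj = Fin.snoc (v mb) e → e = 2 := by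
        intro h_eb jj e hjj
        obtain ⟨m, e', hw', hside'⟩ := hrange jj
        rw [hw'] at hjj
        obtain ⟨hv_eq, he_eq⟩ := snoc_injj hjj
        have hm_eq : m = mb := hvinj hv_eq
        rcases hside' with ⟨h1, h2, _⟩ | ⟨h1, _, _, _⟩
        · subst hm_eq
          have := heb1 h2
          omega
        · omega
      -- lifting an old successor relation at ℓ' ≠ ℓ
      have liftsucc : ∀ ℓ', ℓ' ≠ ℓ → SuccAt v (ltNode lab ℓ') (v ma) (v mb) →
          SuccAt w (ltNode (Fin.snoc lab ℓ) ℓ') a b := by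
        intro ℓ' hne hS
        constructor
        · rw [ha, hb]
          exact (ltNode_snoc_ne hne hAB).mpr hS.1
        · intro k ⟨h1, h2⟩
          obtain ⟨mk, ek, hwk, hsidek⟩ := hrange k
          rw [hwk, ha] at h1
          rw [hwk, hb] at h2
          by_cases hzA : v mk = v ma
          · rw [hzA] at h1
            obtain ⟨h_ea, h_ek⟩ := (ltNode_snoc_ne_eq hne).mp h1
            have := hAcopy h_ea k ek (by rw [hwk, hzA])
            omega
          · by_cases hzB : v mk = v mb
            · rw [hzB] at h2
              obtain ⟨h_ek, h_eb⟩ := (ltNode_snoc_ne_eq hne).mp h2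
              have := hBcopy h_eb k ek (by rw [hwk, hzB])
              omega
            · exact hS.2 mk ⟨(ltNode_snoc_ne hne (fun hc => hzA hc.symm)).mp h1,
                (ltNode_snoc_ne hne hzB).mp h2⟩
      -- lifting the old successor relation at ℓ itself, when suffixes agree
      have liftsuccl : ea = eb → SuccAt v (ltNode lab ℓ) (v ma) (v mb) →
          SuccAt w (ltNode (Fin.snoc lab ℓ) ℓ) a b := by
        intro heaeb hS
        have hea12 : ea = 1 ∨ ea = 2 := by rcases hsidea' with ⟨h1, _⟩ | ⟨h1, _⟩ <;> omega
        constructor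
        · rw [ha, hb, ← heaeb]
          exact (ltNode_snoc_same).mpr hS.1
        · intro k ⟨h1, h2⟩
          obtain ⟨mk, ek, hwk, hsidek⟩ := hrange k
          rw [hwk, ha] at h1
          rw [hwk, hb] at h2
          have hek12 : ek = 1 ∨ ek = 2 := by rcases hsidek with ⟨he, _⟩ | ⟨he, _⟩ <;> omega
          rcases hea12 with hea | hea
          · -- ea = eb = 1
            rcases hek12 with hek | hek
            · rw [hea, hek] at h1
              rw [hek, ← heaeb, hea] at h2
              exact hS.2 mk ⟨(ltNode_snoc_same).mp h1, (ltNode_snoc_same).mp h2⟩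
            · rw [hea, hek] at h1
              exact ltNode_snoc_12_false _ _ h1
          · -- ea = eb = 2
            rcases hek12 with hek | hek
            · rw [hek, ← heaeb, hea] at h2
              exact ltNode_snoc_12_false _ _ h2
            · rw [hea, hek] at h1
              rw [hek, ← heaeb, hea] at h2
              exact hS.2 mk ⟨(ltNode_snoc_same).mp h1, (ltNode_snoc_same).mp h2⟩
      rcases hvgood _ _ holdadj with ⟨hTot, hsucc⟩ | ⟨hTot, ℓs, hs1, hsq, ⟨hmax, hmin⟩, hsucc'⟩
      · -- old δ = 0
        have hSl := hsucc ℓ hl1 hlq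
        have hmb_eq : (mb:ℕ) = (ma:ℕ) + 1 := succ_index hsort hSl
        have heaeb : ea = eb := by
          by_cases hm : h - 1 ≤ (ma:ℕ)
          · have := hea2 hm
            have := heb1
            rcases hsideb' with ⟨h1, _⟩ | ⟨h1, _⟩ <;> omega
          · rcases hsidea' with ⟨h1, _⟩ | ⟨h1, h2⟩
            · have := heb1 (by omega)
              omega
            · omega
        left
        refine ⟨?_, fun ℓ' hp1 hp2 => ?_⟩
        · rw [ha, hb, aTot_snoc, aTot_snoc, hTot, heaeb]
        · by_cases hne : ℓ' = ℓ
          · subst hne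
            exact liftsuccl heaeb hSl
          · exact liftsucc ℓ' hne (hsucc ℓ' hp1 hp2)
      · -- old δ = 1
        by_cases hls : ℓs = ℓ
        · -- max/min at ℓ : a is global max, b global min for ltNode ℓ
          subst hls
          have hma_d : (ma:ℕ) = d := max_index hvinj hsort hmax
          have hmb_0 : (mb:ℕ) = 0 := min_index hvinj hsort hmin
          have hea : ea = 2 := hea2 (by omega)
          have heb : eb = 1 := heb1 (by omega)
          left
          refine ⟨?_, fun ℓ' hp1 hp2 => ?_⟩
          · rw [ha, hb, aTot_snoc, aTot_snoc, hea, heb, hTot]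
            simp
          · by_cases hne : ℓ' = ℓs
            · subst hne
              constructor
              · rw [ha, hb, hea, heb]
                exact ltNode_snoc_21 _ _
              · intro k ⟨h1, h2⟩
                obtain ⟨mk, ek, hwk, hsidek⟩ := hrange k
                rw [hwk, ha, hea] at h1
                rw [hwk, hb, heb] at h2
                have hek12 : ek = 1 ∨ ek = 2 := by rcases hsidek with ⟨he, _⟩ | ⟨he, _⟩ <;> omega
                rcases hek12 with hek | hek
                · rw [hek] at h2
                  have hzB := (ltNode_snoc_same).mp h2
                  by_cases hc : v mk = v mb
                  · rw [hc] at hzB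
                    exact ltNode_irrefl _ _ _ hzB
                  · exact ltNode_asymm hzB (hmin mk hc)
                · rw [hek] at h1
                  have hzA := (ltNode_snoc_same).mp h1
                  by_cases hc : v mk = v ma
                  · rw [hc] at hzA
                    exact ltNode_irrefl _ _ _ hzA
                  · exact ltNode_asymm (hmax mk hc) hzA
            · exact liftsucc ℓ' hne (hsucc' ℓ' hp1 hp2 hne)
        · -- ℓs ≠ ℓ : successor at ℓ, max/min lifts at ℓs
          have hSl := hsucc' ℓ hl1 hlq (fun hc => hls hc.symm)
          have hmb_eq : (mb:ℕ) = (ma:ℕ) + 1 := succ_index hsort hSl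
          have heaeb : ea = eb := by
            by_cases hm : h - 1 ≤ (ma:ℕ)
            · have := hea2 hm
              have := heb1
              rcases hsideb' with ⟨h1, _⟩ | ⟨h1, _⟩ <;> omega
            · rcases hsidea' with ⟨h1, _⟩ | ⟨h1, h2⟩
              · have := heb1 (by omega)
                omega
              · omega
          right
          refine ⟨?_, ℓs, hs1, hsq, ⟨?_, ?_⟩, fun ℓ' hp1 hp2 hpne => ?_⟩
          · rw [ha, hb, aTot_snoc, aTot_snoc, hTot, heaeb]
            omega
          · -- max side at ℓs
            intro k hk
            obtain ⟨mk, ek, hwk, hsidek⟩ := hrange k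
            rw [hwk, ha]
            by_cases hz : v mk = v ma
            · have hekne : ek ≠ ea := by
                intro hc
                apply hk
                rw [hwk, hz, hc, ha]
              have hea12 : ea = 1 ∨ ea = 2 := by rcases hsidea' with ⟨h1, _⟩ | ⟨h1, _⟩ <;> omega
              have hek12 : ek = 1 ∨ ek = 2 := by rcases hsidek with ⟨he, _⟩ | ⟨he, _⟩ <;> omega
              rcases hea12 with hea | hea
              · have := hAcopy hea k ek (by rw [hwk, hz])
                omega
              · have hek : ek = 1 := by omega
                rw [hz, hek, hea]
                exact (ltNode_snoc_ne_eq hls).mpr ⟨rfl, rfl⟩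
            · exact (ltNode_snoc_ne hls hz).mpr (hmax mk hz)
          · -- min side at ℓs
            intro k hk
            obtain ⟨mk, ek, hwk, hsidek⟩ := hrange k
            rw [hwk, hb]
            by_cases hz : v mk = v mb
            · have hekne : ek ≠ eb := by
                intro hc
                apply hk
                rw [hwk, hz, hc, hb]
              have heb12 : eb = 1 ∨ eb = 2 := by rcases hsideb' with ⟨h1, _⟩ | ⟨h1, _⟩ <;> omega
              have hek12 : ek = 1 ∨ ek = 2 := by rcases hsidek with ⟨he, _⟩ | ⟨he, _⟩ <;> omega
              rcases heb12 with heb | heb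
              · have hek : ek = 2 := by omega
                rw [hz, hek, heb]
                exact (ltNode_snoc_ne_eq hls).mpr ⟨rfl, rfl⟩
              · have := hBcopy heb k ek (by rw [hwk, hz])
                omega
            · exact (ltNode_snoc_ne hls (fun hc => hz hc.symm)).mpr (hmin mk hz)
          · by_cases hne : ℓ' = ℓ
            · subst hne
              exact liftsuccl heaeb hSl
            · exact liftsucc ℓ' hne (hsucc' ℓ' hp1 hp2 hpne)

end Step


lemma constructible_inv {q d₀ : ℕ} {lab₀ : Fin d₀ → ℕ} {u₀ : Fin (d₀+1) → Fin d₀ → ℕ}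
    (hR : Constructible q d₀ lab₀ u₀) : KInv q d₀ lab₀ u₀ := by
  induction hR with
  | base ℓ h1 hq => exact base_inv h1 hq
  | @step d lab u hR ℓ h1 hq v σ hv hsort h hh1 hh2 ih =>
    obtain ⟨hinj, hgood⟩ := ih
    have hvinj : Function.Injective v := by
      intro i j hij
      rw [hv i, hv j] at hij
      exact σ.injective (hinj hij)
    have hvgood : ∀ a b, Adj v a b → Good q lab v a b := by
      intro a b hab
      have hr1 : ∀ k, ∃ k', u k' = v k := fun k => ⟨σ k, (hv k).symm⟩
      have hr2 : ∀ k, ∃ k', v k' = u k := fun k => ⟨σ.symm k, by rw [hv]; simp⟩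
      exact good_trans hr1 (hgood a b (adj_trans hr1 hr2 hab))
    refine step_inv h1 hq hvinj hvgood hsort hh1 hh2 ?_ ?_
    · intro j hj pf
      rw [dif_pos hj]
    · intro j hj pf
      rw [dif_neg hj]

/-- If the tuples of a constructible special point data are listed in increasing
lexicographic order, then `|a_{u_{j+1}}(R)| − |a_{u_j}(R)| ≤ 1` for every `j`. -/
theorem constructible_aTot_step {q d : ℕ} (hq : 1 ≤ q) (hd : 1 ≤ d)
    {lab : Fin d → ℕ} {u : Fin (d + 1) → Fin d → ℕ}
    (hR : Constructible q d lab u)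
    (hlex : ∀ i j : Fin (d + 1), i < j → lexLt (u i) (u j)) :
    ∀ j : Fin d, (aTot (u j.succ) : ℤ) - (aTot (u j.castSucc) : ℤ) ≤ 1 := by
  obtain ⟨hinj, hgood⟩ := constructible_inv hR
  intro j
  have hcs : j.castSucc < j.succ := Fin.castSucc_lt_succ
  have hadj : Adj u (u j.castSucc) (u j.succ) := by
    refine ⟨⟨j.castSucc, rfl⟩, ⟨j.succ, rfl⟩, hlex _ _ hcs, fun k ⟨h1, h2⟩ => ?_⟩
    rcases lt_trichotomy k j.castSucc with hc | hc | hc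
    · exact lexLt_asymm h1 (hlex k j.castSucc hc)
    · subst hc
      exact lexLt_irrefl _ h1
    · rcases lt_trichotomy k j.succ with hc' | hc' | hc'
      · exfalso
        have h1' := Fin.lt_def.mp hc
        have h2' := Fin.lt_def.mp hc'
        simp only [Fin.coe_castSucc, Fin.val_succ] at h1' h2'
        omega
      · subst hc'
        exact lexLt_irrefl _ h2
      · exact lexLt_asymm h2 (hlex j.succ k hc')
  rcases hgood _ _ hadj with ⟨hTot, _⟩ | ⟨hTot, _⟩ <;> omega
end
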